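/- Let H be a finite-dimensional complex Hilbert space, A, B₁, B₂ self-adjoint operators on H with operator norms ‖A‖ ≤ 1, ‖B₁‖ ≤ 1, ‖B₂‖ ≤ 1, and let ρ_S = Σⱼ γⱼ τⱼ ⊗ τⱼ be a density operator on H ⊗ H, where γⱼ > 0, Σⱼ γⱼ = 1 and each τⱼ is a density operator on H. Then |tr[ρ_S (A ⊗ B₁)] - tr[ρ_S (A ⊗ B₂)]| ≤ 1 - tr[ρ_S (B₁ ⊗ B₂)]. -/

import Mathlib

open Matrix
set_option maxHeartbeats 1000000
open scoped ComplexOrder Kronecker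

/-- The operator norm (ℓ²→ℓ² norm) of a square complex matrix. -/
noncomputable def opNorm {n : Type*} [Fintype n] [DecidableEq n] (A : Matrix n n ℂ) : ℝ :=
  ‖Matrix.toEuclideanCLM (𝕜 := ℂ) A‖

lemma trace_real {n : ℕ} {τ X : Matrix (Fin n) (Fin n) ℂ} (hτ : τ.IsHermitian)
    (hX : X.IsHermitian) : ((τ * X).trace).im = 0 := by
  have h : star ((τ * X).trace) = (τ * X).trace := by
    rw [← Matrix.trace_conjTranspose, Matrix.conjTranspose_mul, hτ.eq, hX.eq,
      Matrix.trace_mul_comm]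
  have := congrArg Complex.im h
  simp at this
  linarith

lemma trace_bound {n : ℕ} (τ X : Matrix (Fin n) (Fin n) ℂ) (hτ : τ.PosSemidef)
    (hτtr : τ.trace = 1) : |((τ * X).trace).re| ≤ opNorm X := by
  open scoped MatrixOrder Matrix.Norms.L2Operator in
  set s := CFC.sqrt τ with hs
  open scoped MatrixOrder Matrix.Norms.L2Operator in
  have hsh : s.IsHermitian := (CFC.sqrt_nonneg τ).posSemidef.1
  open scoped MatrixOrder Matrix.Norms.L2Operator in
  have hss : s * s = τ := CFC.sqrt_mul_sqrt_self τ hτ.nonneg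
  have hconj : ∀ x y, (starRingEnd ℂ) (s x y) = s y x := by
    intro x y
    conv_rhs => rw [← hsh.eq]
    simp [Matrix.conjTranspose_apply]
  set T := Matrix.toEuclideanCLM (𝕜 := ℂ) X with hT
  set v : Fin n → EuclideanSpace ℂ (Fin n) :=
    fun i => (WithLp.equiv 2 (Fin n → ℂ)).symm (fun k => s k i) with hv
  have key : (τ * X).trace = ∑ i, (inner ℂ (v i) (T (v i)) : ℂ) := by
    rw [← hss, Matrix.mul_assoc, Matrix.trace_mul_comm]
    rw [Matrix.trace]
    refine Finset.sum_congr rfl fun i _ => ?_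
    have hTv : T (v i) = (WithLp.equiv 2 (Fin n → ℂ)).symm (X.mulVec fun k => s k i) :=
      Matrix.toEuclideanCLM_toLp X _
    simp only [hTv, PiLp.inner_apply, RCLike.inner_apply, WithLp.equiv_symm_apply, PiLp.toLp_apply,
      hT, Matrix.toEuclideanCLM_toLp, WithLp.ofLp_toLp, Matrix.mulVec, dotProduct, Matrix.mul_apply, Matrix.diag_apply, hv]
    simp only [Finset.sum_mul, Finset.mul_sum]
    rw [Finset.sum_comm]
    refine Finset.sum_congr rfl fun x _ => Finset.sum_congr rfl fun k _ => ?_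
    rw [hconj]; ring
  have hnorm : ∀ i, (‖v i‖ : ℝ) ^ 2 = (τ i i).re := by
    intro i
    have h1 : (inner ℂ (v i) (v i) : ℂ) = τ i i := by
      simp only [PiLp.inner_apply, RCLike.inner_apply, WithLp.equiv_symm_apply, PiLp.toLp_apply, hv]
      rw [← hss]
      simp only [Matrix.mul_apply]
      refine Finset.sum_congr rfl fun k _ => ?_
      rw [hconj]; ring
    have h2 : (inner ℂ (v i) (v i) : ℂ) = (‖v i‖ : ℂ) ^ 2 := inner_self_eq_norm_sq_to_K _
    have h3 := h1.symm.trans h2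
    have h4 := congrArg Complex.re h3
    rw [h4, ← Complex.ofReal_pow, Complex.ofReal_re]
  have hsum : ∑ i, (‖v i‖ : ℝ) ^ 2 = 1 := by
    have h5 : (∑ i, τ i i) = (1 : ℂ) := hτtr
    have h6 := congrArg Complex.re h5
    simp only [Complex.re_sum] at h6
    simp only [hnorm]
    simpa using h6
  calc |((τ * X).trace).re| = |(∑ i, (inner ℂ (v i) (T (v i)) : ℂ)).re| := by rw [key]
    _ ≤ ∑ i, |((inner ℂ (v i) (T (v i)) : ℂ)).re| := by
        rw [Complex.re_sum]; exact Finset.abs_sum_le_sum_abs _ _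
    _ ≤ ∑ i, ‖T‖ * ‖v i‖ ^ 2 := by
        apply Finset.sum_le_sum
        intro i _
        calc |((inner ℂ (v i) (T (v i)) : ℂ)).re| ≤ ‖(inner ℂ (v i) (T (v i)) : ℂ)‖ :=
              Complex.abs_re_le_norm _
          _ ≤ ‖v i‖ * ‖T (v i)‖ := norm_inner_le_norm _ _
          _ ≤ ‖v i‖ * (‖T‖ * ‖v i‖) := by gcongr; exact T.le_opNorm _
          _ = ‖T‖ * ‖v i‖ ^ 2 := by ring
    _ = ‖T‖ := by rw [← Finset.mul_sum, hsum, mul_one]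
    _ = opNorm X := rfl

lemma scalar_bell (a b c : ℝ) (ha : |a| ≤ 1) (hb : |b| ≤ 1) (hc : |c| ≤ 1) :
    |a * b - a * c| ≤ 1 - b * c := by
  rw [abs_le] at *
  constructor <;>
  nlinarith [mul_nonneg (by linarith : (0:ℝ) ≤ 1 - b) (by linarith : (0:ℝ) ≤ 1 + c),
    mul_nonneg (by linarith : (0:ℝ) ≤ 1 + b) (by linarith : (0:ℝ) ≤ 1 - c),
    mul_nonneg (by linarith : (0:ℝ) ≤ 1 - a) (by linarith : (0:ℝ) ≤ 1 + b),
    mul_nonneg (by linarith : (0:ℝ) ≤ 1 + a) (by linarith : (0:ℝ) ≤ 1 - b),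
    mul_nonneg (by linarith : (0:ℝ) ≤ 1 - a) (by linarith : (0:ℝ) ≤ 1 - c),
    mul_nonneg (by linarith : (0:ℝ) ≤ 1 + a) (by linarith : (0:ℝ) ≤ 1 + c),
    mul_nonneg (by linarith : (0:ℝ) ≤ 1 - a) (by linarith : (0:ℝ) ≤ 1 + c),
    mul_nonneg (by linarith : (0:ℝ) ≤ 1 + a) (by linarith : (0:ℝ) ≤ 1 - c)]

theorem bell_inequality_special_separable {n N : ℕ}
    (A B₁ B₂ : Matrix (Fin n) (Fin n) ℂ)
    (hA : A.IsHermitian) (hB₁ : B₁.IsHermitian) (hB₂ : B₂.IsHermitian)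
    (hAn : opNorm A ≤ 1) (hB₁n : opNorm B₁ ≤ 1) (hB₂n : opNorm B₂ ≤ 1)
    (γ : Fin N → ℝ) (hγpos : ∀ j, 0 < γ j) (hγsum : ∑ j, γ j = 1)
    (τ : Fin N → Matrix (Fin n) (Fin n) ℂ)
    (hτ : ∀ j, (τ j).PosSemidef) (hτtr : ∀ j, (τ j).trace = 1)
    (ρS : Matrix (Fin n × Fin n) (Fin n × Fin n) ℂ)
    (hρS : ρS = ∑ j, (γ j : ℂ) • (τ j ⊗ₖ τ j)) :
    |((ρS * (A ⊗ₖ B₁)).trace).re - ((ρS * (A ⊗ₖ B₂)).trace).re| ≤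
      1 - ((ρS * (B₁ ⊗ₖ B₂)).trace).re := by
  have hexp : ∀ (M P : Matrix (Fin n) (Fin n) ℂ), M.IsHermitian → P.IsHermitian →
      ((ρS * (M ⊗ₖ P)).trace).re =
        ∑ j, γ j * (((τ j * M).trace).re * ((τ j * P).trace).re) := by
    intro M P hM hP
    rw [hρS, Finset.sum_mul, Matrix.trace_sum, Complex.re_sum]
    refine Finset.sum_congr rfl fun j _ => ?_
    rw [smul_mul_assoc, ← Matrix.mul_kronecker_mul, Matrix.trace_smul, Matrix.trace_kronecker]
    have hx := trace_real (hτ j).1 hM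
    have hy := trace_real (hτ j).1 hP
    simp [Complex.mul_re, Complex.mul_im, hx, hy]
  set a : Fin N → ℝ := fun j => ((τ j * A).trace).re with hadef
  set b : Fin N → ℝ := fun j => ((τ j * B₁).trace).re with hbdef
  set c : Fin N → ℝ := fun j => ((τ j * B₂).trace).re with hcdef
  have ha : ∀ j, |a j| ≤ 1 := fun j => (trace_bound (τ j) A (hτ j) (hτtr j)).trans hAn
  have hb : ∀ j, |b j| ≤ 1 := fun j => (trace_bound (τ j) B₁ (hτ j) (hτtr j)).trans hB₁n
  have hc : ∀ j, |c j| ≤ 1 := fun j => (trace_bound (τ j) B₂ (hτ j) (hτtr j)).trans hB₂n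
  rw [hexp A B₁ hA hB₁, hexp A B₂ hA hB₂, hexp B₁ B₂ hB₁ hB₂]
  rw [← Finset.sum_sub_distrib]
  calc |∑ j, (γ j * (a j * b j) - γ j * (a j * c j))|
      ≤ ∑ j, |γ j * (a j * b j) - γ j * (a j * c j)| := Finset.abs_sum_le_sum_abs _ _
    _ ≤ ∑ j, γ j * (1 - b j * c j) := by
        refine Finset.sum_le_sum fun j _ => ?_
        have h1 : γ j * (a j * b j) - γ j * (a j * c j) =
            γ j * (a j * b j - a j * c j) := by ring
        rw [h1, abs_mul, abs_of_pos (hγpos j)]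
        exact mul_le_mul_of_nonneg_left (scalar_bell _ _ _ (ha j) (hb j) (hc j))
          (hγpos j).le
    _ = 1 - ∑ j, γ j * (b j * c j) := by
        simp only [mul_sub, mul_one, Finset.sum_sub_distrib, hγsum]
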